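/- The function x : [0,T) → ℝ² given by x(t) = M(T−t)·M(T−t₀)⁻¹·x₀ with M(τ) = [[τ sin(ln τ), τ cos(ln τ)], [−cos(ln τ), sin(ln τ)]] satisfies ẋ(t) = A(T−t)·x(t) for all t ∈ [t₀, T), where A(τ) = [[−1/τ, 1], [−1/τ², 0]], and for x₀ ≠ 0 the limit lim_{t→T} x(t) does not exist. -/

import Mathlib

open Matrix Real Set Filter Topology

noncomputable def M (τ : ℝ) : Matrix (Fin 2) (Fin 2) ℝ :=
  !![τ * Real.sin (Real.log τ), τ * Real.cos (Real.log τ);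
     -Real.cos (Real.log τ), Real.sin (Real.log τ)]

noncomputable def A (τ : ℝ) : Matrix (Fin 2) (Fin 2) ℝ :=
  !![-1/τ, 1; -1/τ^2, 0]

theorem stmt_7 (T t₀ : ℝ) (ht₀ : 0 ≤ t₀) (hT : t₀ < T) (x₀ : Fin 2 → ℝ)
    (x : ℝ → Fin 2 → ℝ)
    (hx : ∀ t, x t = (M (T - t) * (M (T - t₀))⁻¹) *ᵥ x₀) :
    (∀ t ∈ Set.Ico t₀ T, ∀ i : Fin 2,
        HasDerivAt (fun s => x s i) ((A (T - t) *ᵥ x t) i) t) ∧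
    (x₀ ≠ 0 → ¬ ∃ L : Fin 2 → ℝ, Tendsto x (nhdsWithin T (Set.Iio T)) (nhds L)) := by
  set c : Fin 2 → ℝ := (M (T - t₀))⁻¹ *ᵥ x₀ with hc
  have hxc : ∀ t, x t = M (T - t) *ᵥ c := by
    intro t; rw [hx t, hc, Matrix.mulVec_mulVec]
  have hdet : (M (T - t₀)).det = T - t₀ := by
    simp [M, Matrix.det_fin_two_of]
    nlinarith [Real.sin_sq_add_cos_sq (Real.log (T - t₀))]
  constructor
  · intro t ht i
    obtain ⟨ht1, ht2⟩ := ht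
    have hτ : 0 < T - t := by linarith
    have hu : HasDerivAt (fun s : ℝ => T - s) (-1) t := by
      simpa using (hasDerivAt_id t).const_sub T
    have hlog : HasDerivAt (fun s => Real.log (T - s)) ((T - t)⁻¹ * (-1)) t :=
      (Real.hasDerivAt_log hτ.ne').comp t hu
    have hsin : HasDerivAt (fun s => Real.sin (Real.log (T - s)))
        (Real.cos (Real.log (T - t)) * ((T - t)⁻¹ * (-1))) t :=
      (Real.hasDerivAt_sin _).comp t hlog
    have hcos : HasDerivAt (fun s => Real.cos (Real.log (T - s)))
        (-Real.sin (Real.log (T - t)) * ((T - t)⁻¹ * (-1))) t :=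
      (Real.hasDerivAt_cos _).comp t hlog
    simp only [hxc, M, A, Matrix.mulVec, dotProduct, Fin.sum_univ_two,
      Matrix.cons_val', Matrix.cons_val_zero, Matrix.cons_val_one, Matrix.head_cons,
      Matrix.empty_val', Matrix.cons_val_fin_one, Matrix.head_fin_const]
    fin_cases i
    · simp only []
      simp only [Fin.zero_eta, Fin.mk_one, Matrix.of_apply, Matrix.cons_val', Matrix.cons_val_zero, Matrix.cons_val_one, Matrix.head_cons, Matrix.empty_val', Matrix.cons_val_fin_one]
      have h0 : HasDerivAt
          (fun s => (T - s) * Real.sin (Real.log (T - s)) * c 0 +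
            (T - s) * Real.cos (Real.log (T - s)) * c 1)
          (((-1) * Real.sin (Real.log (T - t)) +
             (T - t) * (Real.cos (Real.log (T - t)) * ((T - t)⁻¹ * (-1)))) * c 0 +
           ((-1) * Real.cos (Real.log (T - t)) +
             (T - t) * (-Real.sin (Real.log (T - t)) * ((T - t)⁻¹ * (-1)))) * c 1) t :=
        ((hu.mul hsin).mul_const (c 0)).add ((hu.mul hcos).mul_const (c 1))
      convert h0 using 1
      field_simp
      ring
    · simp only [Fin.zero_eta, Fin.mk_one, Matrix.of_apply, Matrix.cons_val', Matrix.cons_val_zero, Matrix.cons_val_one, Matrix.head_cons, Matrix.empty_val', Matrix.cons_val_fin_one]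
      have h1 : HasDerivAt
          (fun s => -Real.cos (Real.log (T - s)) * c 0 +
            Real.sin (Real.log (T - s)) * c 1)
          ((-(-Real.sin (Real.log (T - t)) * ((T - t)⁻¹ * (-1)))) * c 0 +
           (Real.cos (Real.log (T - t)) * ((T - t)⁻¹ * (-1))) * c 1) t :=
        (hcos.neg.mul_const (c 0)).add (hsin.mul_const (c 1))
      convert h1 using 1
      field_simp
      ring
  · rintro hx0 ⟨L, hL⟩
    have hcne : c ≠ 0 := by
      intro h
      apply hx0
      have hinv : M (T - t₀) * (M (T - t₀))⁻¹ = 1 :=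
        Matrix.mul_nonsing_inv _ (by rw [hdet]; exact (isUnit_iff_ne_zero.2 (by linarith)))
      have : M (T - t₀) *ᵥ c = x₀ := by
        rw [hc, Matrix.mulVec_mulVec, hinv, Matrix.one_mulVec]
      rw [h, Matrix.mulVec_zero] at this
      exact this.symm
    have hL1 : Tendsto (fun t => x t 1) (nhdsWithin T (Set.Iio T)) (nhds (L 1)) :=
      tendsto_pi_nhds.mp hL 1
    have key : ∀ θ : ℝ, L 1 = -Real.cos θ * c 0 + Real.sin θ * c 1 := by
      intro θ
      set u : ℕ → ℝ := fun n => T - Real.exp (θ - n * (2 * π)) with hu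
      have hmul : Tendsto (fun n : ℕ => (n : ℝ) * (2 * π)) atTop atTop :=
        tendsto_natCast_atTop_atTop.atTop_mul_const (by positivity)
      have hbot : Tendsto (fun n : ℕ => θ - n * (2 * π)) atTop atBot := by
        simpa [sub_eq_add_neg] using tendsto_atBot_add_const_left atTop θ (tendsto_neg_atTop_atBot.comp hmul)
      have hexp : Tendsto (fun n : ℕ => Real.exp (θ - n * (2 * π))) atTop (nhds 0) :=
        Real.tendsto_exp_atBot.comp hbot
      have hut : Tendsto u atTop (nhdsWithin T (Set.Iio T)) := by
        apply tendsto_nhdsWithin_of_tendsto_nhds_of_eventually_within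
        · simpa [hu] using tendsto_const_nhds.sub hexp
        · exact Filter.Eventually.of_forall fun n => by
            simp only [hu, Set.mem_Iio]
            exact sub_lt_self _ (Real.exp_pos _)
      have hcomp : Tendsto (fun n => x (u n) 1) atTop (nhds (L 1)) := hL1.comp hut
      have hconst : ∀ n : ℕ, x (u n) 1 = -Real.cos θ * c 0 + Real.sin θ * c 1 := by
        intro n
        have hTu : T - u n = Real.exp (θ - n * (2 * π)) := by simp [hu]
        rw [hxc, hTu]
        simp [M, Matrix.mulVec, dotProduct, Fin.sum_univ_two, Real.log_exp,
          Real.cos_periodic.sub_nat_mul_eq, Real.sin_periodic.sub_nat_mul_eq]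
      exact tendsto_nhds_unique hcomp (by simp only [hconst]; exact tendsto_const_nhds)
    have k0 := key 0
    have kpi := key π
    have kpi2 := key (π / 2)
    simp [Real.cos_pi, Real.sin_pi, Real.cos_pi_div_two, Real.sin_pi_div_two] at k0 kpi kpi2
    apply hcne
    funext i
    fin_cases i <;> simp <;> linarith
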